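/- arXiv:1801.04995 — 3 statements merged into one kernel-verified Lean document; each statement's English description precedes it below -/
import Mathlib

section
/- Rolle's theorem for μ-differentiable functions: let 0 < a < b, g : [a,b] → ℝ continuous on [a,b], μ-differentiable on (a,b) for some μ ∈ (0,1), with g(a) = g(b). Then there exists ξ ∈ (a,b) with V^μ g(ξ) = 0. -/
open Real MeasureTheory Filter intervalIntegral Set

/-- Extended beta function `B_p(x,y)`. -/
noncomputable def extBeta (p x y : ℝ) : ℝ :=
  ∫ u in Set.Ioo (0:ℝ) 1, u ^ (x - 1) * (1 - u) ^ (y - 1) * Real.exp (-p / (u * (1 - u)))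

/-- Pochhammer symbol `(c)_n = Γ(c+n)/Γ(c)`. -/
noncomputable def poch (c : ℝ) (n : ℕ) : ℝ := Real.Gamma (c + n) / Real.Gamma c

/-- Truncated extended Mittag-Leffler partial sum. -/
noncomputable def truncML (i : ℕ) (p γ c α β z : ℝ) : ℝ :=
  ∑ n ∈ Finset.range (i + 1),
    extBeta p (γ + n) (c - γ) * poch c n * z ^ n /
      (extBeta 0 γ (c - γ) * Real.Gamma (α * n + β) * n.factorial)

/-- The `Γ(β)`-scaled truncated extended Mittag-Leffler function `S`. -/
noncomputable def truncS (i : ℕ) (p γ c α β z : ℝ) : ℝ :=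
  Real.Gamma β * truncML i p γ c α β z

/-- The constant `K = Γ(β) B_p(γ+1,c−γ) Γ(c+1) / (Γ(γ) Γ(c−γ) Γ(α+β))`. -/
noncomputable def Kconst (p γ c α β : ℝ) : ℝ :=
  Real.Gamma β * extBeta p (γ + 1) (c - γ) * Real.Gamma (c + 1) /
    (Real.Gamma γ * Real.Gamma (c - γ) * Real.Gamma (α + β))

/-- `g` has truncated ν-fractional derivative `L` of order `μ` at `t`. -/
def HasVDerivAt (i : ℕ) (p γ c α β μ : ℝ) (g : ℝ → ℝ) (t L : ℝ) : Prop :=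
  Filter.Tendsto (fun ε : ℝ =>
      (g (t * truncS i p γ c α β (ε * t ^ (-μ))) - g t) / ε)
    (nhdsWithin 0 {(0:ℝ)}ᶜ) (nhds L)

/-- The truncated ν-fractional derivative, for differentiable `f`:
`V^μ f (t) = K t^{1−μ} f'(t)`. -/
noncomputable def V (p γ c α β μ : ℝ) (f : ℝ → ℝ) (t : ℝ) : ℝ :=
  Kconst p γ c α β * t ^ (1 - μ) * deriv f t

/-- The ν-fractional integral `I^μ_a g (t) = K⁻¹ ∫_a^t g(x) x^{μ−1} dx`. -/
noncomputable def Iv (p γ c α β μ a : ℝ) (g : ℝ → ℝ) (t : ℝ) : ℝ :=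
  (Kconst p γ c α β)⁻¹ * ∫ x in a..t, g x * x ^ (μ - 1)

lemma extBeta_cont {p x y : ℝ} :
    ContinuousOn (fun u : ℝ => u ^ (x - 1) * (1 - u) ^ (y - 1) * Real.exp (-p / (u * (1 - u))))
      (Set.Ioo (0:ℝ) 1) := by
  intro u hu
  obtain ⟨h0, h1⟩ := hu
  have h1' : (0:ℝ) < 1 - u := by linarith
  apply ContinuousWithinAt.mul
  apply ContinuousWithinAt.mul
  · exact (Real.continuousAt_rpow_const u _ (Or.inl h0.ne')).continuousWithinAt
  · exact (ContinuousAt.comp (Real.continuousAt_rpow_const (1-u) _ (Or.inl h1'.ne'))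
      (by fun_prop)).continuousWithinAt
  · apply ContinuousAt.continuousWithinAt
    have : u * (1 - u) ≠ 0 := (mul_pos h0 h1').ne'
    fun_prop (disch := assumption)

lemma integrand_pos {p x y : ℝ} {u : ℝ} (hu : u ∈ Set.Ioo (0:ℝ) 1) :
    0 < u ^ (x - 1) * (1 - u) ^ (y - 1) * Real.exp (-p / (u * (1 - u))) := by
  obtain ⟨h0, h1⟩ := hu
  have h1' : (0:ℝ) < 1 - u := by linarith
  exact mul_pos (mul_pos (Real.rpow_pos_of_pos h0 _) (Real.rpow_pos_of_pos h1' _)) (Real.exp_pos _)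

lemma extBeta_integrableOn {p x y : ℝ} (hp : 0 ≤ p) (hx : 0 < x) (hy : 0 < y) :
    IntegrableOn (fun u : ℝ => u ^ (x - 1) * (1 - u) ^ (y - 1) * Real.exp (-p / (u * (1 - u))))
      (Set.Ioo (0:ℝ) 1) := by
  set f : ℝ → ℝ := fun u => u ^ (x - 1) * (1 - u) ^ (y - 1) * Real.exp (-p / (u * (1 - u))) with hf
  have hexp : ∀ u ∈ Set.Ioo (0:ℝ) 1, Real.exp (-p / (u * (1 - u))) ≤ 1 := by
    intro u ⟨h0, h1⟩
    have h1' : (0:ℝ) < 1 - u := by linarith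
    calc Real.exp (-p / (u * (1 - u))) ≤ Real.exp 0 :=
          Real.exp_le_exp.mpr (div_nonpos_of_nonpos_of_nonneg (by linarith) (mul_pos h0 h1').le)
      _ = 1 := Real.exp_zero
  have hmeas : ∀ s ⊆ Set.Ioo (0:ℝ) 1, MeasurableSet s → AEStronglyMeasurable f (volume.restrict s) :=
    fun s hs hms => (extBeta_cont.mono hs).aestronglyMeasurable hms
  have key1 : IntegrableOn f (Set.Ioo (0:ℝ) (3/4)) := by
    have hint : IntegrableOn (fun u : ℝ => 4 * u ^ (x-1)) (Set.Ioo (0:ℝ) (3/4)) :=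
      ((integrableOn_Ioo_rpow_iff (by norm_num)).mpr (by linarith)).const_mul 4
    apply hint.mono' (hmeas _ (fun u hu => ⟨hu.1, by linarith [hu.2]⟩) measurableSet_Ioo)
    rw [ae_restrict_iff' measurableSet_Ioo]
    filter_upwards with u
    rintro ⟨h0, h34⟩
    have h1' : (0:ℝ) < 1 - u := by linarith
    have hA : (0:ℝ) < u ^ (x-1) := Real.rpow_pos_of_pos h0 _
    have hB : (1 - u) ^ (y - 1) ≤ 4 := by
      have : (1 - u) ^ (y - 1) = (1-u) ^ y * (1-u)⁻¹ := by
        rw [← Real.rpow_neg_one (1-u), ← Real.rpow_add h1']; ring_nf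
      rw [this]
      have hy1 : (1-u) ^ y ≤ 1 := Real.rpow_le_one h1'.le (by linarith) hy.le
      have hinv : (1-u)⁻¹ ≤ 4 := by
        rw [inv_le_comm₀ h1' (by norm_num)]; linarith
      nlinarith [Real.rpow_pos_of_pos h1' y, inv_pos.mpr h1']
    have hE : Real.exp (-p / (u * (1 - u))) ≤ 1 := hexp u ⟨h0, by linarith⟩
    have hfpos : 0 ≤ f u := (integrand_pos ⟨h0, by linarith⟩).le
    rw [Real.norm_eq_abs, abs_of_nonneg hfpos]
    calc f u ≤ u ^ (x-1) * (1-u)^(y-1) * 1 :=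
          mul_le_mul_of_nonneg_left hE (by positivity)
      _ = u ^ (x-1) * (1-u)^(y-1) := by ring
      _ ≤ u ^ (x-1) * 4 := mul_le_mul_of_nonneg_left hB hA.le
      _ = 4 * u ^ (x-1) := by ring
  have key2 : IntegrableOn f (Set.Ioo (1/2:ℝ) 1) := by
    have hint0 : IntervalIntegrable (fun u : ℝ => u ^ (y-1)) volume 0 (1/2) :=
      intervalIntegrable_rpow' (by linarith)
    have hint1 : IntervalIntegrable (fun u : ℝ => (1 - u) ^ (y-1)) volume (1/2) 1 := by
      have h := (hint0.comp_sub_left 1).symm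
      norm_num at h ⊢
      convert h using 2
    have hint : IntegrableOn (fun u : ℝ => 4 * (1 - u) ^ (y-1)) (Set.Ioo (1/2:ℝ) 1) := by
      have := (intervalIntegrable_iff_integrableOn_Ioo_of_le (by norm_num : (1:ℝ)/2 ≤ 1)).mp hint1
      exact this.const_mul 4
    apply hint.mono' (hmeas _ (fun u hu => ⟨by linarith [hu.1], hu.2⟩) measurableSet_Ioo)
    rw [ae_restrict_iff' measurableSet_Ioo]
    filter_upwards with u
    rintro ⟨h12, h1⟩
    have h0 : (0:ℝ) < u := by linarith
    have h1' : (0:ℝ) < 1 - u := by linarith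
    have hB : (0:ℝ) < (1 - u) ^ (y-1) := Real.rpow_pos_of_pos h1' _
    have hA : u ^ (x - 1) ≤ 4 := by
      have : u ^ (x - 1) = u ^ x * u⁻¹ := by
        rw [← Real.rpow_neg_one u, ← Real.rpow_add h0]; ring_nf
      rw [this]
      have hx1 : u ^ x ≤ 1 := Real.rpow_le_one h0.le h1.le hx.le
      have hinv : u⁻¹ ≤ 4 := by rw [inv_le_comm₀ h0 (by norm_num)]; linarith
      nlinarith [Real.rpow_pos_of_pos h0 x, inv_pos.mpr h0]
    have hE : Real.exp (-p / (u * (1 - u))) ≤ 1 := hexp u ⟨h0, h1⟩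
    have hfpos : 0 ≤ f u := (integrand_pos ⟨h0, h1⟩).le
    rw [Real.norm_eq_abs, abs_of_nonneg hfpos]
    calc f u ≤ u ^ (x-1) * (1-u)^(y-1) * 1 :=
          mul_le_mul_of_nonneg_left hE (by positivity)
      _ = (1-u)^(y-1) * u ^ (x-1) := by ring
      _ ≤ (1-u)^(y-1) * 4 := mul_le_mul_of_nonneg_left hA hB.le
      _ = 4 * (1-u)^(y-1) := by ring
  have : Set.Ioo (0:ℝ) 1 ⊆ Set.Ioo (0:ℝ) (3/4) ∪ Set.Ioo (1/2:ℝ) 1 := by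
    intro u hu
    rcases lt_or_ge u (3/4) with h | h
    · exact Or.inl ⟨hu.1, h⟩
    · exact Or.inr ⟨by linarith, hu.2⟩
  exact (key1.union key2).mono_set this

lemma extBeta_pos {p x y : ℝ} (hp : 0 ≤ p) (hx : 0 < x) (hy : 0 < y) : 0 < extBeta p x y := by
  rw [extBeta]
  rw [setIntegral_pos_iff_support_of_nonneg_ae]
  · rw [show Function.support (fun u : ℝ => u ^ (x - 1) * (1 - u) ^ (y - 1) *
        Real.exp (-p / (u * (1 - u)))) ∩ Set.Ioo (0:ℝ) 1 = Set.Ioo (0:ℝ) 1 from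
      Set.inter_eq_right.mpr (fun u hu => (integrand_pos hu).ne')]
    simp
  · filter_upwards [ae_restrict_mem measurableSet_Ioo] with u hu using (integrand_pos hu).le
  · exact extBeta_integrableOn hp hx hy

lemma poch_pos {c : ℝ} (hc : 0 < c) (n : ℕ) : 0 < poch c n :=
  div_pos (Real.Gamma_pos_of_pos (by positivity)) (Real.Gamma_pos_of_pos hc)

lemma truncS_continuous (i : ℕ) (p γ c α β : ℝ) : Continuous (truncS i p γ c α β) := by
  unfold truncS truncML
  exact continuous_const.mul (continuous_finset_sum _ fun n _ =>
    (continuous_const.mul (continuous_pow n)).div_const _)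

lemma truncS_zero_pos {p γ c α β : ℝ} (i : ℕ)
    (hp : 0 ≤ p) (hγ : 0 < γ) (hγc : γ < c) (hα : 0 < α) (hβ : 0 < β) :
    0 < truncS i p γ c α β 0 := by
  unfold truncS truncML
  apply mul_pos (Real.Gamma_pos_of_pos hβ)
  rw [Finset.sum_eq_single_of_mem 0 (Finset.mem_range.mpr (Nat.succ_pos i))
    (fun n _ hn => by simp [zero_pow hn])]
  simp only [Nat.cast_zero, add_zero, pow_zero, mul_one, Nat.factorial_zero, Nat.cast_one]
  have hcγ : (0:ℝ) < c - γ := by linarith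
  exact div_pos (mul_pos (extBeta_pos hp hγ hcγ) (poch_pos (by linarith) 0))
    (mul_pos (extBeta_pos le_rfl hγ hcγ)
      (Real.Gamma_pos_of_pos (by rw [mul_zero, zero_add]; exact hβ)))

lemma hasDerivAt_truncS {p γ c α β : ℝ} {i : ℕ} (hi : 1 ≤ i) :
    HasDerivAt (truncS i p γ c α β)
      (Real.Gamma β * (extBeta p (γ + 1) (c - γ) * poch c 1 /
        (extBeta 0 γ (c - γ) * Real.Gamma (α + β)))) 0 := by
  have h : ∀ n ∈ Finset.range (i + 1),
      HasDerivAt (fun z : ℝ => extBeta p (γ + n) (c - γ) * poch c n * z ^ n /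
          (extBeta 0 γ (c - γ) * Real.Gamma (α * n + β) * n.factorial))
        (extBeta p (γ + n) (c - γ) * poch c n * ((n:ℝ) * 0 ^ (n - 1)) /
          (extBeta 0 γ (c - γ) * Real.Gamma (α * n + β) * n.factorial)) 0 :=
    fun n _ => ((hasDerivAt_pow n (0:ℝ)).const_mul _).div_const _
  have total := (HasDerivAt.sum h).const_mul (Real.Gamma β)
  have hsum : ∑ n ∈ Finset.range (i + 1),
      extBeta p (γ + n) (c - γ) * poch c n * ((n:ℝ) * 0 ^ (n - 1)) /
        (extBeta 0 γ (c - γ) * Real.Gamma (α * n + β) * n.factorial)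
      = extBeta p (γ + 1) (c - γ) * poch c 1 /
        (extBeta 0 γ (c - γ) * Real.Gamma (α + β)) := by
    rw [Finset.sum_eq_single_of_mem 1 (Finset.mem_range.mpr (by omega))]
    · norm_num
    · rintro (_|_|n) _ hn
      · norm_num
      · exact absurd rfl hn
      · simp [zero_pow]
  rw [hsum] at total
  exact total.congr_of_eventuallyEq (Filter.Eventually.of_forall fun y => by
    simp [truncS, truncML, Finset.sum_apply])

lemma core_max {a b s0 ξ L κ : ℝ} {g : ℝ → ℝ} {φ : ℝ → ℝ → ℝ}
    (hξ : ξ ∈ Set.Ioo a b) (hs0 : 0 < s0)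
    (hφc : ∀ t, Continuous (φ t))
    (hφ0 : ∀ t, φ t 0 = t * s0)
    (hκ : HasDerivAt (φ ξ) κ 0) (hκpos : 0 < κ)
    (hmax : IsMaxOn g (Set.Icc a b) ξ)
    (hQ : Filter.Tendsto (fun ε => (g (φ ξ ε) - g ξ) / ε) (nhdsWithin 0 {(0:ℝ)}ᶜ) (nhds L))
    (hnum : ∀ t ∈ Set.Ioo a b, Filter.Tendsto (fun ε => g (φ t ε))
      (nhdsWithin 0 {(0:ℝ)}ᶜ) (nhds (g t))) :
    L = 0 := by
  obtain ⟨haξ, hξb⟩ := hξ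
  by_contra hL0
  have hslope : Filter.Tendsto (slope (φ ξ) 0) (nhdsWithin 0 {(0:ℝ)}ᶜ) (nhds κ) :=
    hasDerivAt_iff_tendsto_slope.mp hκ
  have h2 : ∀ᶠ ε in nhdsWithin (0:ℝ) {(0:ℝ)}ᶜ, 0 < slope (φ ξ) 0 ε :=
    hslope.eventually (eventually_gt_nhds hκpos)
  rcases lt_or_gt_of_ne hL0 with hLneg | hLpos
  · -- L < 0
    have h1 : ∀ᶠ ε in nhdsWithin (0:ℝ) {(0:ℝ)}ᶜ, (g (φ ξ ε) - g ξ) / ε < L/2 :=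
      hQ.eventually (eventually_lt_nhds (by linarith))
    obtain ⟨δ, hδpos, hδ⟩ := Metric.eventually_nhds_iff.mp
      (eventually_nhdsWithin_iff.mp (h1.and h2))
    set ε₁ : ℝ := -(δ/2) with hε₁def
    have hε₁neg : ε₁ < 0 := by simp [hε₁def]; linarith
    have hP₁ := hδ (show dist ε₁ 0 < δ by
        rw [Real.dist_eq, sub_zero, abs_of_neg hε₁neg]; simp [hε₁def]; linarith)
      (by simp [hε₁def]; linarith)
    have hy1 : φ ξ ε₁ < φ ξ 0 := by
      have h := hP₁.2
      rw [slope_def_field, div_pos_iff] at h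
      rcases h with ⟨_, h⟩ | ⟨h, _⟩
      · linarith [h, hε₁neg]
      · linarith [h]
    set y1 : ℝ := φ ξ ε₁ with hy1def
    rw [hφ0] at hy1
    have hys : y1 / s0 < ξ := (div_lt_iff₀ hs0).mpr hy1
    set t : ℝ := max ((ξ+a)/2) ((ξ + y1/s0)/2) with htdef
    have htξ : t < ξ := max_lt (by linarith) (by linarith)
    have hta : a < t := lt_of_lt_of_le (by linarith) (le_max_left _ _)
    have htb : t < b := by linarith
    have hts : y1 < t * s0 := by
      have h : y1/s0 < t := lt_of_lt_of_le (by linarith) (le_max_right _ _)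
      exact (div_lt_iff₀ hs0).mp h
    have hty0 : t * s0 < ξ * s0 := mul_lt_mul_of_pos_right htξ hs0
    set u : ℝ := (t * s0 + ξ * s0)/2 with hudef
    have hut : t * s0 < u := by simp [hudef]; linarith
    have huy0 : u < ξ * s0 := by simp [hudef]; linarith
    have h3 : ∀ᶠ ε in nhds (0:ℝ), u < φ ξ ε :=
      ((hφc ξ).tendsto 0).eventually (eventually_gt_nhds (by rw [hφ0]; linarith))
    obtain ⟨δ₂, hδ₂pos, hδ₂⟩ := Metric.eventually_nhds_iff.mp h3
    set ρ : ℝ := min (δ₂/2) (δ/2) with hρdef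
    have hρpos : 0 < ρ := lt_min (by linarith) (by linarith)
    have key : ∀ x ∈ Set.Icc y1 u, g ξ - L/2 * ρ ≤ g x := by
      rintro x ⟨hxy1, hxu⟩
      have hx' : x ∈ Set.Icc (φ ξ ε₁) (φ ξ 0) := ⟨hxy1, by rw [hφ0]; linarith⟩
      obtain ⟨ε, ⟨hεε₁, hε0⟩, hεx⟩ :=
        intermediate_value_Icc hε₁neg.le ((hφc ξ).continuousOn) hx'
      have hεneg : ε < 0 := by
        rcases hε0.lt_or_eq with h | h
        · exact h
        · exfalso; rw [h, hφ0] at hεx; linarith [hεx ▸ hxu]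
      have hρε : ε ≤ -ρ := by
        by_contra hc; push_neg at hc
        have hd : dist ε 0 < δ₂ := by
          rw [Real.dist_eq, sub_zero, abs_of_neg hεneg]
          have : ρ ≤ δ₂/2 := min_le_left _ _
          linarith
        have := hδ₂ hd
        rw [hεx] at this; linarith
      have hQε : (g (φ ξ ε) - g ξ) / ε < L/2 := by
        refine (hδ ?_ (by simpa using hεneg.ne)).1
        rw [Real.dist_eq, sub_zero, abs_of_neg hεneg]
        have h9 : -(δ/2) ≤ ε := by rw [← hε₁def]; exact hεε₁
        linarith
      rw [div_lt_iff_of_neg hεneg] at hQε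
      rw [hεx] at hQε
      have hmul : L/2 * (-ρ) ≤ L/2 * ε := mul_le_mul_of_nonpos_left hρε (by linarith)
      linarith
    have htmem : t ∈ Set.Ioo a b := ⟨hta, htb⟩
    have h4 : ∀ᶠ ε in nhds (0:ℝ), φ t ε ∈ Set.Icc y1 u := by
      have hgt : ∀ᶠ ε in nhds (0:ℝ), y1 < φ t ε :=
        ((hφc t).tendsto 0).eventually (eventually_gt_nhds (by rw [hφ0]; linarith))
      have hlt : ∀ᶠ ε in nhds (0:ℝ), φ t ε < u :=
        ((hφc t).tendsto 0).eventually (eventually_lt_nhds (by rw [hφ0]; linarith))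
      filter_upwards [hgt, hlt] with ε h5 h6 using ⟨h5.le, h6.le⟩
    have h5 : ∀ᶠ ε in nhdsWithin (0:ℝ) {(0:ℝ)}ᶜ, g ξ - L/2 * ρ ≤ g (φ t ε) :=
      (h4.filter_mono nhdsWithin_le_nhds).mono (fun ε hε => key _ hε)
    have hgt' : g ξ - L/2 * ρ ≤ g t := ge_of_tendsto (hnum t htmem) h5
    have hle : g t ≤ g ξ := hmax ⟨hta.le, htb.le⟩
    have hm : 0 < -(L/2) * ρ := mul_pos (by linarith) hρpos
    linarith
  · -- L > 0
    have h1 : ∀ᶠ ε in nhdsWithin (0:ℝ) {(0:ℝ)}ᶜ, L/2 < (g (φ ξ ε) - g ξ) / ε :=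
      hQ.eventually (eventually_gt_nhds (by linarith))
    obtain ⟨δ, hδpos, hδ⟩ := Metric.eventually_nhds_iff.mp
      (eventually_nhdsWithin_iff.mp (h1.and h2))
    set ε₁ : ℝ := δ/2 with hε₁def
    have hε₁pos : 0 < ε₁ := by simp [hε₁def]; linarith
    have hP₁ := hδ (show dist ε₁ 0 < δ by
        rw [Real.dist_eq, sub_zero, abs_of_pos hε₁pos]; simp [hε₁def]; linarith)
      (by simp [hε₁def]; linarith)
    have hy1 : φ ξ 0 < φ ξ ε₁ := by
      have h := hP₁.2
      rw [slope_def_field, div_pos_iff] at h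
      rcases h with ⟨h, _⟩ | ⟨_, h⟩
      · linarith [h]
      · linarith [h, hε₁pos]
    set y1 : ℝ := φ ξ ε₁ with hy1def
    rw [hφ0] at hy1
    have hys : ξ < y1 / s0 := (lt_div_iff₀ hs0).mpr hy1
    set t : ℝ := min ((ξ+b)/2) ((ξ + y1/s0)/2) with htdef
    have htξ : ξ < t := lt_min (by linarith) (by linarith)
    have htb : t < b := lt_of_le_of_lt (min_le_left _ _) (by linarith)
    have hta : a < t := by linarith
    have hts : t * s0 < y1 := by
      have h : t < y1/s0 := lt_of_le_of_lt (min_le_right _ _) (by linarith)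
      exact (lt_div_iff₀ hs0).mp h
    have hty0 : ξ * s0 < t * s0 := mul_lt_mul_of_pos_right htξ hs0
    set u : ℝ := (ξ * s0 + t * s0)/2 with hudef
    have hut : u < t * s0 := by simp [hudef]; linarith
    have huy0 : ξ * s0 < u := by simp [hudef]; linarith
    have h3 : ∀ᶠ ε in nhds (0:ℝ), φ ξ ε < u :=
      ((hφc ξ).tendsto 0).eventually (eventually_lt_nhds (by rw [hφ0]; linarith))
    obtain ⟨δ₂, hδ₂pos, hδ₂⟩ := Metric.eventually_nhds_iff.mp h3
    set ρ : ℝ := min (δ₂/2) (δ/2) with hρdef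
    have hρpos : 0 < ρ := lt_min (by linarith) (by linarith)
    have key : ∀ x ∈ Set.Icc u y1, g ξ + L/2 * ρ ≤ g x := by
      rintro x ⟨hxu, hxy1⟩
      have hx' : x ∈ Set.Icc (φ ξ 0) (φ ξ ε₁) := ⟨by rw [hφ0]; linarith, hxy1⟩
      obtain ⟨ε, ⟨hε0, hεε₁⟩, hεx⟩ :=
        intermediate_value_Icc hε₁pos.le ((hφc ξ).continuousOn) hx'
      have hεpos : 0 < ε := by
        rcases hε0.lt_or_eq with h | h
        · exact h
        · exfalso; rw [← h, hφ0] at hεx; linarith [hεx ▸ hxu]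
      have hρε : ρ ≤ ε := by
        by_contra hc; push_neg at hc
        have hd : dist ε 0 < δ₂ := by
          rw [Real.dist_eq, sub_zero, abs_of_pos hεpos]
          have : ρ ≤ δ₂/2 := min_le_left _ _
          linarith
        have := hδ₂ hd
        rw [hεx] at this; linarith
      have hQε : L/2 < (g (φ ξ ε) - g ξ) / ε := by
        refine (hδ ?_ (by simpa using hεpos.ne')).1
        rw [Real.dist_eq, sub_zero, abs_of_pos hεpos]
        have h9 : ε ≤ δ/2 := by rw [← hε₁def]; exact hεε₁
        linarith
      rw [lt_div_iff₀ hεpos] at hQε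
      rw [hεx] at hQε
      have hmul : L/2 * ρ ≤ L/2 * ε := mul_le_mul_of_nonneg_left hρε (by linarith)
      linarith
    have htmem : t ∈ Set.Ioo a b := ⟨hta, htb⟩
    have h4 : ∀ᶠ ε in nhds (0:ℝ), φ t ε ∈ Set.Icc u y1 := by
      have hgt : ∀ᶠ ε in nhds (0:ℝ), u < φ t ε :=
        ((hφc t).tendsto 0).eventually (eventually_gt_nhds (by rw [hφ0]; linarith))
      have hlt : ∀ᶠ ε in nhds (0:ℝ), φ t ε < y1 :=
        ((hφc t).tendsto 0).eventually (eventually_lt_nhds (by rw [hφ0]; linarith))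
      filter_upwards [hgt, hlt] with ε h5 h6 using ⟨h5.le, h6.le⟩
    have h5 : ∀ᶠ ε in nhdsWithin (0:ℝ) {(0:ℝ)}ᶜ, g ξ + L/2 * ρ ≤ g (φ t ε) :=
      (h4.filter_mono nhdsWithin_le_nhds).mono (fun ε hε => key _ hε)
    have hgt' : g ξ + L/2 * ρ ≤ g t := ge_of_tendsto (hnum t htmem) h5
    have hle : g t ≤ g ξ := hmax ⟨hta.le, htb.le⟩
    have hm : 0 < L/2 * ρ := mul_pos (by linarith) hρpos
    linarith


theorem stmt11 (p γ c α β μ a b : ℝ) (i : ℕ) (g : ℝ → ℝ)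
    (hp : 0 ≤ p) (hγ : 0 < γ) (hγc : γ < c) (hα : 0 < α) (hβ : 0 < β)
    (ha : 0 < a) (hab : a < b) (hμ : 0 < μ) (hμ1 : μ < 1)
    (hcont : ContinuousOn g (Set.Icc a b))
    (hdiff : ∀ t ∈ Set.Ioo a b, ∃ L, HasVDerivAt i p γ c α β μ g t L)
    (heq : g a = g b) :
    ∃ ξ ∈ Set.Ioo a b, HasVDerivAt i p γ c α β μ g ξ 0 := by
  have hcγ : (0:ℝ) < c - γ := by linarith
  rcases Nat.eq_zero_or_pos i with hi | hi
  · -- `i = 0`: the function `ε ↦ truncS 0 … (ε t^{-μ})` is constant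
    subst hi
    have htmem : (a+b)/2 ∈ Set.Ioo a b := ⟨by linarith, by linarith⟩
    set t : ℝ := (a+b)/2 with htdef
    obtain ⟨L, hL⟩ := hdiff t htmem
    have hconst : ∀ z w : ℝ, truncS 0 p γ c α β z = truncS 0 p γ c α β w := by
      intro z w; simp [truncS, truncML]
    refine ⟨t, htmem, ?_⟩
    unfold HasVDerivAt at hL ⊢
    set d : ℝ := g (t * truncS 0 p γ c α β (0 * t ^ (-μ))) - g t with hd
    have hfun : ∀ ε : ℝ, (g (t * truncS 0 p γ c α β (ε * t ^ (-μ))) - g t) = d := by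
      intro ε; rw [hd, hconst (ε * t ^ (-μ)) (0 * t ^ (-μ))]
    have hd0 : d = 0 := by
      have h1 : Filter.Tendsto (fun ε : ℝ => (d / ε) * ε)
          (nhdsWithin 0 {(0:ℝ)}ᶜ) (nhds (L * 0)) :=
        (hL.congr (fun ε => by rw [hfun ε])).mul
          (tendsto_id.mono_left nhdsWithin_le_nhds)
      have h2 : Filter.Tendsto (fun ε : ℝ => (d / ε) * ε)
          (nhdsWithin 0 {(0:ℝ)}ᶜ) (nhds d) := by
        apply Filter.Tendsto.congr' _ tendsto_const_nhds
        filter_upwards [eventually_mem_nhdsWithin] with ε hε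
        rw [div_mul_cancel₀ d (by simpa using hε)]
      have h3 := tendsto_nhds_unique h2 h1
      simpa using h3
    have hzero : ∀ ε : ℝ, (g (t * truncS 0 p γ c α β (ε * t ^ (-μ))) - g t) / ε = 0 := by
      intro ε; rw [hfun ε, hd0, zero_div]
    exact Filter.Tendsto.congr (fun ε => (hzero ε).symm) tendsto_const_nhds
  · -- `i ≥ 1`
    obtain ⟨ξ, hξmem, hext⟩ := exists_Ioo_extr_on_Icc hab hcont heq
    obtain ⟨L, hL⟩ := hdiff ξ hξmem
    unfold HasVDerivAt at hL
    set s0 : ℝ := truncS i p γ c α β 0 with hs0def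
    have hs0 : 0 < s0 := truncS_zero_pos i hp hγ hγc hα hβ
    set φ : ℝ → ℝ → ℝ := fun t ε => t * truncS i p γ c α β (ε * t ^ (-μ)) with hφdef
    have hφc : ∀ t, Continuous (φ t) := fun t =>
      continuous_const.mul ((truncS_continuous i p γ c α β).comp
        (continuous_id.mul continuous_const))
    have hφ0 : ∀ t, φ t 0 = t * s0 := fun t => by simp [hφdef, hs0def]
    have hξ0 : 0 < ξ := lt_trans ha hξmem.1
    set B1 : ℝ := Real.Gamma β * (extBeta p (γ + 1) (c - γ) * poch c 1 /
        (extBeta 0 γ (c - γ) * Real.Gamma (α + β))) with hB1def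
    have hB1 : 0 < B1 :=
      mul_pos (Real.Gamma_pos_of_pos hβ) (div_pos
        (mul_pos (extBeta_pos hp (by linarith) hcγ) (poch_pos (by linarith) 1))
        (mul_pos (extBeta_pos le_rfl hγ hcγ) (Real.Gamma_pos_of_pos (by linarith))))
    have hw : (0:ℝ) < ξ ^ (-μ) := Real.rpow_pos_of_pos hξ0 _
    have hlin : HasDerivAt (fun ε : ℝ => ε * ξ ^ (-μ)) (ξ ^ (-μ)) 0 :=
      hasDerivAt_mul_const _
    have hS : HasDerivAt (truncS i p γ c α β) B1 ((fun ε : ℝ => ε * ξ ^ (-μ)) 0) := by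
      simpa using hasDerivAt_truncS (p := p) (γ := γ) (c := c) (α := α) (β := β) hi
    have hcomp := hS.comp 0 hlin
    have hκ : HasDerivAt (φ ξ) (ξ * (B1 * ξ ^ (-μ))) 0 := by
      simp only [hφdef]
      exact hcomp.const_mul ξ
    have hκpos : 0 < ξ * (B1 * ξ ^ (-μ)) := mul_pos hξ0 (mul_pos hB1 hw)
    have hnum : ∀ t ∈ Set.Ioo a b, Filter.Tendsto (fun ε => g (φ t ε))
        (nhdsWithin 0 {(0:ℝ)}ᶜ) (nhds (g t)) := by
      intro t ht
      obtain ⟨L', hL'⟩ := hdiff t ht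
      unfold HasVDerivAt at hL'
      have h1 : Filter.Tendsto (fun ε : ℝ => ((g (φ t ε) - g t) / ε) * ε)
          (nhdsWithin 0 {(0:ℝ)}ᶜ) (nhds (L' * 0)) :=
        hL'.mul (tendsto_id.mono_left nhdsWithin_le_nhds)
      have h2 : Filter.Tendsto (fun ε : ℝ => g (φ t ε) - g t)
          (nhdsWithin 0 {(0:ℝ)}ᶜ) (nhds 0) := by
        have h2' := Filter.Tendsto.congr'
          (f₂ := fun ε : ℝ => g (φ t ε) - g t) (by
            filter_upwards [eventually_mem_nhdsWithin] with ε hε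
            exact div_mul_cancel₀ _ (by simpa using hε)) h1
        simpa using h2'
      have h3 := h2.add (tendsto_const_nhds (x := g t)
        (f := nhdsWithin (0:ℝ) {(0:ℝ)}ᶜ))
      simpa using h3
    have hfinal : L = 0 := by
      rcases hext with hmin | hmax
      · have hmax' : IsMaxOn (fun x => -g x) (Set.Icc a b) ξ := hmin.neg
        have hQneg : Filter.Tendsto
            (fun ε => ((fun x => -g x) (φ ξ ε) - (fun x => -g x) ξ) / ε)
            (nhdsWithin 0 {(0:ℝ)}ᶜ) (nhds (-L)) := by
          apply Filter.Tendsto.congr _ hL.neg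
          intro ε; simp; ring
        have hnumneg : ∀ t ∈ Set.Ioo a b, Filter.Tendsto
            (fun ε => (fun x => -g x) (φ t ε))
            (nhdsWithin 0 {(0:ℝ)}ᶜ) (nhds ((fun x => -g x) t)) :=
          fun t ht => (hnum t ht).neg
        have := core_max hξmem hs0 hφc hφ0 hκ hκpos hmax' hQneg hnumneg
        linarith
      · exact core_max hξmem hs0 hφc hφ0 hκ hκpos hmax hL hnum
    refine ⟨ξ, hξmem, ?_⟩
    unfold HasVDerivAt
    rw [hfinal] at hL
    exact hL
end

section
/- Mean value theorem for μ-differentiable functions: let 0 < a < b, g : [a,b] → ℝ continuous on [a,b] and differentiable on (a,b), μ ∈ (0,1). Then there exists ξ ∈ (a,b) such that V^μ g(ξ) = K · (g(b) − g(a)) / (b^μ/μ − a^μ/μ), where K = Γ(β)B_p(γ+1,c−γ)Γ(c+1)/(Γ(γ)Γ(c−γ)Γ(α+β)). -/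
open Real MeasureTheory Filter intervalIntegral

theorem stmt12 (p γ c α β μ a b : ℝ) (g : ℝ → ℝ)
    (hp : 0 ≤ p) (hγ : 0 < γ) (hγc : γ < c) (hα : 0 < α) (hβ : 0 < β)
    (ha : 0 < a) (hab : a < b) (hμ : 0 < μ) (hμ1 : μ < 1)
    (hcont : ContinuousOn g (Set.Icc a b))
    (hdiff : DifferentiableOn ℝ g (Set.Ioo a b)) :
    ∃ ξ ∈ Set.Ioo a b, V p γ c α β μ g ξ =
      Kconst p γ c α β * (g b - g a) / (b ^ μ / μ - a ^ μ / μ) := by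
  have hf' : ∀ x ∈ Set.Ioo a b, HasDerivAt (fun x : ℝ => x ^ μ) (μ * x ^ (μ - 1)) x := by
    intro x hx
    exact Real.hasDerivAt_rpow_const (Or.inl (ne_of_gt (ha.trans hx.1)))
  have hg' : ∀ x ∈ Set.Ioo a b, HasDerivAt g (deriv g x) x := fun x hx =>
    ((hdiff x hx).differentiableAt (isOpen_Ioo.mem_nhds hx)).hasDerivAt
  have hfc : ContinuousOn (fun x : ℝ => x ^ μ) (Set.Icc a b) := by
    apply ContinuousOn.rpow_const continuousOn_id
    intro x hx
    exact Or.inl (ne_of_gt (ha.trans_le hx.1))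
  obtain ⟨ξ, hξ, heq⟩ := exists_ratio_hasDerivAt_eq_ratio_slope (fun x : ℝ => x ^ μ)
    (fun x => μ * x ^ (μ - 1)) hab hfc hf' g (deriv g) hcont hg'
  refine ⟨ξ, hξ, ?_⟩
  have hξ0 : 0 < ξ := ha.trans hξ.1
  have hba : a ^ μ < b ^ μ := Real.rpow_lt_rpow ha.le hab hμ
  have hpow : ξ ^ (1 - μ) * ξ ^ (μ - 1) = 1 := by
    rw [← Real.rpow_add hξ0]; norm_num
  have hμ0 : μ ≠ 0 := ne_of_gt hμ
  have hdg : deriv g ξ = (g b - g a) * (μ * ξ ^ (μ - 1)) / (b ^ μ - a ^ μ) := by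
    field_simp [sub_ne_zero.2 (ne_of_gt hba)] at heq ⊢
    linarith [heq]
  rw [V, hdg]
  field_simp [sub_ne_zero.2 (ne_of_gt hba)]
  linear_combination Kconst p γ c α β * (g b - g a) * hpow
end

section
/- Non-semigroup property of the ν-fractional integral: for g continuous on [a,t], 0 < a ≤ t, and μ, η ∈ (0,1), I^μ_a(I^η_a g)(t) = K^{−1}[(t^μ/μ)·I^η_a g(t) − (1/μ)·I^{μ+η}_a g(t)]. -/
open Real MeasureTheory Filter intervalIntegral

theorem stmt16 (p γ c α β μ η a t : ℝ) (g : ℝ → ℝ)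
    (hp : 0 ≤ p) (hγ : 0 < γ) (hγc : γ < c) (hα : 0 < α) (hβ : 0 < β)
    (ha : 0 < a) (hat : a ≤ t) (hμ : 0 < μ) (hμ1 : μ < 1) (hη : 0 < η) (hη1 : η < 1)
    (hcont : ContinuousOn g (Set.Icc a t)) :
    Iv p γ c α β μ a (fun s => Iv p γ c α β η a g s) t =
      (Kconst p γ c α β)⁻¹ *
        ((t ^ μ / μ) * Iv p γ c α β η a g t -
          (1 / μ) * Iv p γ c α β (μ + η) a g t) := by
  have huIcc : Set.uIcc a t = Set.Icc a t := Set.uIcc_of_le hat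
  set K := Kconst p γ c α β with hK
  set h : ℝ → ℝ := fun x => g x * x ^ (η - 1) with hh
  have hpos : ∀ x ∈ Set.Icc a t, (0:ℝ) < x := fun x hx => lt_of_lt_of_le ha hx.1
  have hconth : ContinuousOn h (Set.Icc a t) := by
    apply hcont.mul
    intro x hx
    exact (Real.continuousAt_rpow_const x (η - 1) (Or.inl (hpos x hx).ne')).continuousWithinAt
  have hInth : IntervalIntegrable h volume a t := by
    apply ContinuousOn.intervalIntegrable
    rwa [huIcc]
  set F : ℝ → ℝ := fun x => ∫ y in a..x, h y with hF
  have hIntOn : MeasureTheory.IntegrableOn h (Set.uIcc a t) := by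
    rw [huIcc]
    exact hconth.integrableOn_Icc
  have hcontF : ContinuousOn F (Set.Icc a t) := by
    rw [← huIcc]
    exact intervalIntegral.continuousOn_primitive_interval hIntOn
  have hdF : ∀ x ∈ Set.Ioo a t, HasDerivAt F (h x) x := by
    intro x hx
    apply intervalIntegral.integral_hasDerivAt_right (hInth.mono_set ?_)
      ⟨Set.Ioo a t, Ioo_mem_nhds hx.1 hx.2,
        (hconth.mono Set.Ioo_subset_Icc_self).aestronglyMeasurable measurableSet_Ioo⟩
      (hconth.continuousAt (Icc_mem_nhds hx.1 hx.2))
    rw [Set.uIcc_of_le hx.1.le, huIcc]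
    exact Set.Icc_subset_Icc le_rfl hx.2.le
  set v : ℝ → ℝ := fun x => x ^ μ / μ with hv
  have hcontv : ContinuousOn v (Set.Icc a t) := by
    apply ContinuousOn.div_const
    intro x hx
    exact (Real.continuousAt_rpow_const x μ (Or.inl (hpos x hx).ne')).continuousWithinAt
  have hdv : ∀ x ∈ Set.Ioo a t, HasDerivAt v (x ^ (μ - 1)) x := by
    intro x hx
    have hx0 : (0:ℝ) < x := lt_of_lt_of_le ha hx.1.le
    have := (Real.hasDerivAt_rpow_const (x := x) (p := μ) (Or.inl hx0.ne')).div_const μ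
    rw [mul_div_cancel_left₀ _ hμ.ne'] at this
    exact this
  have hIntv' : IntervalIntegrable (fun x => x ^ (μ - 1)) volume a t := by
    apply ContinuousOn.intervalIntegrable
    rw [huIcc]
    intro x hx
    exact (Real.continuousAt_rpow_const x (μ - 1) (Or.inl (hpos x hx).ne')).continuousWithinAt
  have hparts : ∫ x in a..t, F x * x ^ (μ - 1) =
      F t * v t - F a * v a - ∫ x in a..t, h x * v x := by
    apply intervalIntegral.integral_mul_deriv_eq_deriv_mul_of_hasDerivAt
      (huIcc ▸ hcontF) (huIcc ▸ hcontv) ?_ ?_ hInth hIntv'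
    · intro x hx
      exact hdF x (by rwa [min_eq_left hat, max_eq_right hat] at hx)
    · intro x hx
      exact hdv x (by rwa [min_eq_left hat, max_eq_right hat] at hx)
  have hFa : F a = 0 := intervalIntegral.integral_same
  have hhv : ∫ x in a..t, h x * v x = (1/μ) * ∫ x in a..t, g x * x ^ (μ + η - 1) := by
    rw [← intervalIntegral.integral_const_mul]
    apply intervalIntegral.integral_congr
    intro x hx
    rw [huIcc] at hx
    have hx0 : (0:ℝ) < x := hpos x hx
    simp only [hh, hv]
    rw [show μ + η - 1 = (η - 1) + μ by ring, Real.rpow_add hx0]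
    field_simp
  have key : ∫ x in a..t, F x * x ^ (μ - 1) =
      (t ^ μ / μ) * F t - (1/μ) * ∫ x in a..t, g x * x ^ (μ + η - 1) := by
    rw [hparts, hFa, hhv]; simp only [hv]; ring
  simp only [Iv]
  have : (∫ x in a..t, (K⁻¹ * ∫ y in a..x, g y * y ^ (η - 1)) * x ^ (μ - 1)) =
      K⁻¹ * ∫ x in a..t, F x * x ^ (μ - 1) := by
    rw [← intervalIntegral.integral_const_mul]
    apply intervalIntegral.integral_congr
    intro x hx
    simp only [hF, hh]; ring
  rw [this, key]
  ring
end
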